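/- For a spectral measure P on a separable Hilbert space H, there exists a vector g ∈ H of maximal type, i.e., such that for every f ∈ H the measure μ_f(E) = ⟨f, P(E)f⟩ is absolutely continuous with respect to μ_g(E) = ⟨g, P(E)g⟩. -/

import Mathlib

open MeasureTheory Filter Topology
open scoped ENNReal

/-- A spectral measure on a Hilbert space `H` over the measurable space `Λ`:
a projection-valued, strongly countably additive, complete set function. -/
structure SpectralMeasure (Λ H : Type*) [MeasurableSpace Λ]
    [NormedAddCommGroup H] [InnerProductSpace ℂ H] [CompleteSpace H] where
  P : Set Λ → (H →L[ℂ] H)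
  selfAdjoint : ∀ E x y, (inner ℂ (P E x) y : ℂ) = inner ℂ x (P E y)
  idem : ∀ E, P E ∘L P E = P E
  complete : P Set.univ = ContinuousLinearMap.id ℂ H
  countablyAdditive : ∀ E : ℕ → Set Λ, (∀ n, MeasurableSet (E n)) →
    Pairwise (Function.onFun Disjoint E) →
    ∀ x : H, HasSum (fun n => P (E n) x) (P (⋃ n, E n) x)

variable {Λ H : Type*} [MeasurableSpace Λ] [NormedAddCommGroup H]
  [InnerProductSpace ℂ H] [CompleteSpace H]

/-- The cyclic subspace `H_g`: closure of the span of `{P(E) g : E measurable}`. -/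
noncomputable def cyclicSubspace (P : SpectralMeasure Λ H) (g : H) : Submodule ℂ H :=
  (Submodule.span ℂ {x : H | ∃ E : Set Λ, MeasurableSet E ∧ x = P.P E g}).topologicalClosure

/-- `v = J_φ f`, the spectral integral of `φ` applied to `f`, characterized by
`v ∈ H_f` and `⟪P(E) f, v⟫ = ∫_E φ dμ_f` for every measurable `E`.
Here `ν f` is assumed to be the diagonal measure `μ_f(E) = ⟪f, P(E) f⟫`. -/
def IsSpectralIntegralAt (P : SpectralMeasure Λ H) (ν : H → Measure Λ)
    (φ : Λ → ℂ) (f v : H) : Prop :=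
  v ∈ cyclicSubspace P f ∧
    ∀ E : Set Λ, MeasurableSet E → (inner ℂ (P.P E f) v : ℂ) = ∫ l in E, φ l ∂(ν f)

lemma SpectralMeasure.empty (P : SpectralMeasure Λ H) : P.P ∅ = 0 := by
  ext x
  have h := P.countablyAdditive (fun _ => ∅) (fun _ => MeasurableSet.empty)
    (fun i j hij => by simp [Function.onFun]) x
  simp only [Set.iUnion_empty] at h
  have h0 := h.summable.tendsto_atTop_zero
  have := tendsto_nhds_unique h0 tendsto_const_nhds
  simpa using this.symm

lemma SpectralMeasure.add (P : SpectralMeasure Λ H) {E F : Set Λ}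
    (hE : MeasurableSet E) (hF : MeasurableSet F) (hEF : Disjoint E F) :
    P.P (E ∪ F) = P.P E + P.P F := by
  ext x
  set G : ℕ → Set Λ := fun n => if n = 0 then E else if n = 1 then F else ∅ with hG
  have hmeas : ∀ n, MeasurableSet (G n) := by
    intro n; rcases n with _ | _ | n <;> simp [G, hE, hF]
  have hdisj : Pairwise (Function.onFun Disjoint G) := by
    intro i j hij
    rcases i with _ | _ | i <;> rcases j with _ | _ | j <;>
      simp_all [Function.onFun, G, hEF, hEF.symm]
  have hun : (⋃ n, G n) = E ∪ F := by
    apply subset_antisymm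
    · apply Set.iUnion_subset
      intro n; rcases n with _ | _ | n <;> simp [G]
    · apply Set.union_subset
      · exact le_trans (by simp [G]) (Set.subset_iUnion G 0)
      · exact le_trans (by simp [G]) (Set.subset_iUnion G 1)
  have h := P.countablyAdditive G hmeas hdisj x
  rw [hun] at h
  have h2 : HasSum (fun n => P.P (G n) x) (P.P E x + P.P F x) := by
    have : ∀ b ∉ ({0, 1} : Finset ℕ), P.P (G b) x = 0 := by
      intro b hb
      rcases b with _ | _ | b <;> simp_all [G, P.empty]
    have := hasSum_sum_of_ne_finset_zero (L := SummationFilter.unconditional ℕ) this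
    rwa [Finset.sum_pair (by norm_num : (0:ℕ) ≠ 1)] at this
  simpa using h.unique h2

lemma SpectralMeasure.comp_disjoint (P : SpectralMeasure Λ H) {E F : Set Λ}
    (hE : MeasurableSet E) (hF : MeasurableSet F) (hEF : Disjoint E F) :
    P.P E ∘L P.P F = 0 := by
  have hadd := P.add hE hF hEF
  have hsq := P.idem (E ∪ F)
  rw [hadd] at hsq
  have hexp : (P.P E + P.P F) ∘L (P.P E + P.P F)
      = P.P E + P.P F + (P.P E ∘L P.P F + P.P F ∘L P.P E) := by
    rw [ContinuousLinearMap.add_comp, ContinuousLinearMap.comp_add,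
      ContinuousLinearMap.comp_add, P.idem, P.idem]
    abel
  rw [hexp] at hsq
  have hzero : P.P E ∘L P.P F + P.P F ∘L P.P E = 0 := by
    have := hsq
    abel_nf at this ⊢
    linear_combination (norm := module) this
  -- multiply left by P E
  have h1 : P.P E ∘L P.P F + P.P E ∘L (P.P F ∘L P.P E) = 0 := by
    have := congrArg (fun T => P.P E ∘L T) hzero
    simpa [ContinuousLinearMap.comp_add, ← ContinuousLinearMap.comp_assoc, P.idem] using this
  have h2 : P.P E ∘L (P.P F ∘L P.P E) + P.P F ∘L P.P E = 0 := by
    have := congrArg (fun T => T ∘L P.P E) hzero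
    simpa [ContinuousLinearMap.add_comp, ContinuousLinearMap.comp_assoc, P.idem] using this
  -- h1 - h2 : PE PF = PF PE ; hzero : PE PF = - PF PE
  have h3 : P.P E ∘L P.P F = P.P F ∘L P.P E := by
    have e1 := eq_neg_of_add_eq_zero_left h1
    have e2 := eq_neg_of_add_eq_zero_right h2
    exact e1.trans e2.symm
  rw [h3] at hzero
  have h4 : (2:ℂ) • (P.P F ∘L P.P E) = 0 := by rw [two_smul]; exact hzero
  rw [h3]
  simpa using (smul_eq_zero.mp h4).resolve_left (by norm_num)

lemma SpectralMeasure.comp_inter (P : SpectralMeasure Λ H) {E F : Set Λ}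
    (hE : MeasurableSet E) (hF : MeasurableSet F) :
    P.P E ∘L P.P F = P.P (E ∩ F) := by
  have d1 : Disjoint (E ∩ F) (E \ F) := by
    rw [Set.disjoint_left]; rintro a ⟨_, hf⟩ ⟨_, hnf⟩; exact hnf hf
  have d2 : Disjoint (E ∩ F) (F \ E) := by
    rw [Set.disjoint_left]; rintro a ⟨he, _⟩ ⟨_, hne⟩; exact hne he
  have d3 : Disjoint (E \ F) (F \ E) := by
    rw [Set.disjoint_left]; rintro a ⟨he, _⟩ ⟨_, hne⟩; exact hne he
  have hEd : P.P E = P.P (E ∩ F) + P.P (E \ F) := by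
    rw [← P.add (hE.inter hF) (hE.diff hF) d1, Set.inter_union_diff]
  have hFd : P.P F = P.P (E ∩ F) + P.P (F \ E) := by
    rw [← P.add (hE.inter hF) (hF.diff hE) d2, Set.inter_comm, Set.inter_union_diff]
  rw [hEd, hFd, ContinuousLinearMap.add_comp, ContinuousLinearMap.comp_add,
    ContinuousLinearMap.comp_add, P.idem,
    P.comp_disjoint (hE.inter hF) (hF.diff hE) d2,
    P.comp_disjoint (hE.diff hF) (hE.inter hF) d1.symm,
    P.comp_disjoint (hE.diff hF) (hF.diff hE) d3]
  simp

lemma SpectralMeasure.norm_sq (P : SpectralMeasure Λ H) (E : Set Λ) (f : H) :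
    (inner ℂ f (P.P E f) : ℂ).re = ‖P.P E f‖ ^ 2 := by
  have h1 : (inner ℂ f (P.P E f) : ℂ) = inner ℂ (P.P E f) (P.P E f) := by
    conv_lhs => rw [← P.idem E]
    exact (P.selfAdjoint E f (P.P E f)).symm
  rw [h1, inner_self_eq_norm_sq_to_K]
  norm_cast


/-- existence of a vector of maximal type: some `g` with `μ_f ≪ μ_g` for all `f`. -/
theorem exists_maximal_vector
    [TopologicalSpace.SeparableSpace H] (P : SpectralMeasure Λ H)
    (ν : H → Measure Λ)
    (hν : ∀ (f : H) (E : Set Λ), MeasurableSet E →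
      ν f E = ENNReal.ofReal (inner ℂ f (P.P E f) : ℂ).re) :
    ∃ g : H, ∀ f : H, ν f ≪ ν g := by
  haveI : Nonempty H := ⟨0⟩
  set x : ℕ → H := TopologicalSpace.denseSeq H with hxdef
  have hx : DenseRange x := TopologicalSpace.denseRange_denseSeq H
  set S : ℕ → Submodule ℂ H := fun n =>
    Submodule.span ℂ {v | ∃ E : Set Λ, ∃ j, j < n ∧ MeasurableSet E ∧ v = P.P E (x j)}
    with hSdef
  set M : ℕ → Submodule ℂ H := fun n => (S n).topologicalClosure with hMdef
  have hMclosed : ∀ n, IsClosed (M n : Set H) := fun n =>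
    Submodule.isClosed_topologicalClosure _
  -- invariance of M n under every P E
  have hinv : ∀ (n : ℕ) (E : Set Λ), MeasurableSet E → ∀ v ∈ M n, P.P E v ∈ M n := by
    intro n E hEm
    have hle : S n ≤ (M n).comap (P.P E : H →ₗ[ℂ] H) := by
      rw [hSdef, Submodule.span_le]
      rintro v ⟨F, j, hj, hFm, rfl⟩
      simp only [Set.mem_setOf_eq, SetLike.mem_coe, Submodule.mem_comap,
        ContinuousLinearMap.coe_coe]
      have hc : P.P E (P.P F (x j)) = P.P (E ∩ F) (x j) := by
        rw [← ContinuousLinearMap.comp_apply, P.comp_inter hEm hFm]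
      rw [hc]
      exact Submodule.le_topologicalClosure _
        (Submodule.subset_span ⟨E ∩ F, j, hj, hEm.inter hFm, rfl⟩)
    intro v hv
    have := Submodule.topologicalClosure_minimal _ hle
      (by
        have : ((M n).comap (P.P E : H →ₗ[ℂ] H) : Set H) = (P.P E) ⁻¹' (M n) := rfl
        rw [this]
        exact (hMclosed n).preimage (P.P E).continuous) hv
    exact this
  have hMmono : ∀ {m n : ℕ}, m ≤ n → M m ≤ M n := by
    intro m n hmn
    exact Submodule.topologicalClosure_mono (Submodule.span_mono
      (fun v ⟨E, j, hj, hEm, hv⟩ => ⟨E, j, lt_of_lt_of_le hj hmn, hEm, hv⟩))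
  have hxM : ∀ {m n : ℕ}, m < n → x m ∈ M n := by
    intro m n hmn
    refine Submodule.le_topologicalClosure _ (Submodule.subset_span
      ⟨Set.univ, m, hmn, MeasurableSet.univ, ?_⟩)
    rw [P.complete]; rfl
  -- orthogonal complements
  have hproj : ∀ n, ∃ p ∈ M n, x n - p ∈ (M n)ᗮ := by
    intro n
    haveI : CompleteSpace (M n) := (hMclosed n).completeSpace_coe
    exact ⟨(M n).orthogonalProjection (x n), Submodule.coe_mem _,
      (M n).sub_starProjection_mem_orthogonal _⟩
  choose p hpM hyperp using hproj
  set y : ℕ → H := fun n => x n - p n with hydef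
  -- P F (y n) stays orthogonal to M n
  have hPerp : ∀ (n : ℕ) (F : Set Λ), MeasurableSet F → P.P F (y n) ∈ (M n)ᗮ := by
    intro n F hFm
    rw [Submodule.mem_orthogonal]
    intro u hu
    have h1 : (inner ℂ u (P.P F (y n)) : ℂ) = inner ℂ (P.P F u) (y n) :=
      (P.selfAdjoint F u (y n)).symm
    rw [h1]
    exact Submodule.inner_right_of_mem_orthogonal (hinv n F hFm u hu) (hyperp n)
  -- P F (y m) lands in M n for m < n
  have hyMem : ∀ {m n : ℕ}, m < n → ∀ (F : Set Λ), MeasurableSet F → P.P F (y m) ∈ M n := by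
    intro m n hmn F hFm
    have h1 : P.P F (x m) ∈ M n := hinv n F hFm _ (hxM hmn)
    have h2 : P.P F (p m) ∈ M n := hinv n F hFm _ (hMmono hmn.le (hpM m))
    have : P.P F (y m) = P.P F (x m) - P.P F (p m) := by rw [hydef]; simp
    rw [this]; exact sub_mem h1 h2
  -- mutual orthogonality
  have orth : ∀ (E F : Set Λ), MeasurableSet E → MeasurableSet F → ∀ {m n : ℕ}, m ≠ n →
      (inner ℂ (P.P E (y m)) (P.P F (y n)) : ℂ) = 0 := by
    have key : ∀ (E F : Set Λ), MeasurableSet E → MeasurableSet F → ∀ {m n : ℕ}, m < n →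
        (inner ℂ (P.P E (y m)) (P.P F (y n)) : ℂ) = 0 := by
      intro E F hEm hFm m n hmn
      exact Submodule.inner_right_of_mem_orthogonal (hyMem hmn E hEm) (hPerp n F hFm)
    intro E F hEm hFm m n hmn
    rcases hmn.lt_or_gt with h | h
    · exact key E F hEm hFm h
    · rw [← inner_conj_symm, key F E hFm hEm h, map_zero]
  -- the maximal vector
  set c : ℕ → ℂ := fun n => (((1/2 : ℝ)^n / (1 + ‖y n‖) : ℝ) : ℂ) with hcdef
  have hcpos : ∀ n, (0:ℝ) < (1/2 : ℝ)^n / (1 + ‖y n‖) := by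
    intro n
    apply div_pos (by positivity)
    positivity
  have hcne : ∀ n, c n ≠ 0 := by
    intro n
    simp only [hcdef, ne_eq, Complex.ofReal_eq_zero]
    exact (hcpos n).ne'
  have hsumm : Summable (fun n => c n • y n) := by
    apply Summable.of_norm_bounded (g := fun n => (1/2 : ℝ)^n) summable_geometric_two
    intro n
    rw [norm_smul, hcdef, Complex.norm_real, Real.norm_of_nonneg (hcpos n).le]
    rw [div_mul_eq_mul_div, div_le_iff₀ (by positivity)]
    have h0 : (0:ℝ) ≤ (1/2:ℝ)^n := by positivity
    nlinarith [norm_nonneg (y n)]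
  set g : H := ∑' n, c n • y n with hgdef
  have hg : HasSum (fun n => c n • y n) g := hsumm.hasSum
  refine ⟨g, fun f => ?_⟩
  apply Measure.AbsolutelyContinuous.mk
  intro E hEm hgE
  -- from ν g E = 0 deduce P E g = 0
  have hPEg : P.P E g = 0 := by
    rw [hν g E hEm, P.norm_sq, ENNReal.ofReal_eq_zero] at hgE
    have : ‖P.P E g‖ ^ 2 = 0 := le_antisymm hgE (by positivity)
    simpa [pow_eq_zero_iff] using this
  -- each P E (y m) = 0
  have hterm : ∀ m, P.P E (y m) = 0 := by
    have hPg : HasSum (fun n => c n • P.P E (y n)) 0 := by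
      have := (P.P E).hasSum hg
      rw [hPEg] at this
      simpa [_root_.map_smul] using this
    intro m
    have hin := (innerSL ℂ (P.P E (y m))).hasSum hPg
    have heq : (fun n => (innerSL ℂ (P.P E (y m))) (c n • P.P E (y n)))
        = fun n => if n = m then c m * ((‖P.P E (y m)‖ : ℂ) ^ 2) else 0 := by
      funext n
      by_cases hn : n = m
      · subst hn
        simp [inner_smul_right, inner_self_eq_norm_sq_to_K]
      · rw [if_neg hn]
        have : ((innerSL ℂ) ((P.P E) (y m))) (c n • (P.P E) (y n))
            = c n * inner ℂ ((P.P E) (y m)) ((P.P E) (y n)) := by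
          simp [inner_smul_right]
        rw [this, orth E E hEm hEm (Ne.symm hn), mul_zero]
    rw [heq] at hin
    simp only [map_zero] at hin
    have := (hasSum_ite_eq m (c m * ((‖P.P E (y m)‖ : ℂ) ^ 2))).unique hin
    have hnorm : ((‖P.P E (y m)‖ : ℂ) ^ 2) = 0 := by
      rcases mul_eq_zero.mp this with h | h
      · exact absurd h (hcne m)
      · exact h
    have h2 : ‖P.P E (y m)‖ ^ 2 = 0 := by exact_mod_cast hnorm
    have h3 : ‖P.P E (y m)‖ = 0 := by
      have := sq_eq_zero_iff.mp h2
      exact this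
    simpa using norm_eq_zero.mp h3
  -- every P E (x n) = 0 by strong induction
  have claim : ∀ n, P.P E (x n) = 0 := by
    intro n
    induction n using Nat.strong_induction_on with
    | _ n ih =>
      have hker : M n ≤ LinearMap.ker (P.P E : H →ₗ[ℂ] H) := by
        apply Submodule.topologicalClosure_minimal
        · rw [hSdef, Submodule.span_le]
          rintro v ⟨F, j, hj, hFm, rfl⟩
          simp only [SetLike.mem_coe, LinearMap.mem_ker, ContinuousLinearMap.coe_coe]
          have h1 : P.P E (P.P F (x j)) = P.P F (P.P E (x j)) := by
            rw [← ContinuousLinearMap.comp_apply, ← ContinuousLinearMap.comp_apply,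
              P.comp_inter hEm hFm, P.comp_inter hFm hEm, Set.inter_comm]
          rw [h1, ih j hj, map_zero]
        · exact ContinuousLinearMap.isClosed_ker _
      have hx_eq : x n = p n + y n := by rw [hydef]; simp
      rw [hx_eq, map_add]
      have h1 : P.P E (p n) = 0 := hker (hpM n)
      rw [h1, hterm n, add_zero]
  -- P E kills everything by density
  have hall : ∀ v : H, P.P E v = 0 := by
    intro v
    have hcl : IsClosed {w : H | P.P E w = 0} :=
      isClosed_eq (P.P E).continuous continuous_const
    have hsub : Set.range x ⊆ {w : H | P.P E w = 0} := by
      rintro _ ⟨n, rfl⟩; exact claim n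
    exact closure_minimal hsub hcl (hx v)
  rw [hν f E hEm, P.norm_sq, hall f]
  simp
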